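/- arXiv:2511.19781 — 2 statements merged into one kernel-verified Lean document; each statement's English description precedes it below -/
import Mathlib

section
/- Let g, ĝ : E → ℝ be bounded functions on a compact convex set E with g ≤ ĝ pointwise, and fix S₀ ∈ E. Then (conc ĝ)(S₀) = (conc g)(S₀) if and only if for every ε > 0 there exists a continuous affine ℓ_ε on E with ℓ_ε ≥ g on E, ℓ_ε(S₀) ≤ (conc g)(S₀) + ε, and ĝ(s) ≤ ℓ_ε(s) for all s ∈ E. -/
open Set

noncomputable def concEnv {V : Type*} [AddCommGroup V] [Module ℝ V] [TopologicalSpace V]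
    (E : Set V) (f : V → ℝ) (s : V) : ℝ :=
  sInf {y : ℝ | ∃ ℓ : V →ᴬ[ℝ] ℝ, (∀ x ∈ E, f x ≤ ℓ x) ∧ y = ℓ s}

lemma concEnv_set_nonempty {V : Type*} [AddCommGroup V] [Module ℝ V] [TopologicalSpace V]
    (E : Set V) (f : V → ℝ) (s : V) (M : ℝ) (hM : ∀ x ∈ E, |f x| ≤ M) :
    {y : ℝ | ∃ ℓ : V →ᴬ[ℝ] ℝ, (∀ x ∈ E, f x ≤ ℓ x) ∧ y = ℓ s}.Nonempty := by
  refine ⟨M, ContinuousAffineMap.const ℝ V M, fun x hx => ?_, rfl⟩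
  exact (abs_le.mp (hM x hx)).2

lemma concEnv_set_bddBelow {V : Type*} [AddCommGroup V] [Module ℝ V] [TopologicalSpace V]
    (E : Set V) (f : V → ℝ) (s : V) (hs : s ∈ E) :
    BddBelow {y : ℝ | ∃ ℓ : V →ᴬ[ℝ] ℝ, (∀ x ∈ E, f x ≤ ℓ x) ∧ y = ℓ s} := by
  refine ⟨f s, fun y hy => ?_⟩
  obtain ⟨ℓ, hℓ, rfl⟩ := hy
  exact hℓ s hs

theorem stmt2 {V : Type*} [AddCommGroup V] [Module ℝ V] [TopologicalSpace V]
    [IsTopologicalAddGroup V] [ContinuousSMul ℝ V] [LocallyConvexSpace ℝ V]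
    (E : Set V) (hEc : IsCompact E) (hEconv : Convex ℝ E) (hEne : E.Nonempty)
    (g ghat : V → ℝ)
    (hg : ∃ M : ℝ, ∀ x ∈ E, |g x| ≤ M) (hghat : ∃ M : ℝ, ∀ x ∈ E, |ghat x| ≤ M)
    (hle : ∀ x ∈ E, g x ≤ ghat x) (S₀ : V) (hS₀ : S₀ ∈ E) :
    concEnv E ghat S₀ = concEnv E g S₀ ↔
      (∀ ε : ℝ, 0 < ε → ∃ ℓ : V →ᴬ[ℝ] ℝ,
        (∀ x ∈ E, g x ≤ ℓ x) ∧ ℓ S₀ ≤ concEnv E g S₀ + ε ∧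
        ∀ s ∈ E, ghat s ≤ ℓ s) := by
  obtain ⟨M, hM⟩ := hghat
  have hne : {y : ℝ | ∃ ℓ : V →ᴬ[ℝ] ℝ, (∀ x ∈ E, ghat x ≤ ℓ x) ∧ y = ℓ S₀}.Nonempty :=
    concEnv_set_nonempty E ghat S₀ M hM
  have hbbg : BddBelow {y : ℝ | ∃ ℓ : V →ᴬ[ℝ] ℝ, (∀ x ∈ E, g x ≤ ℓ x) ∧ y = ℓ S₀} :=
    concEnv_set_bddBelow E g S₀ hS₀
  have hbbgh : BddBelow {y : ℝ | ∃ ℓ : V →ᴬ[ℝ] ℝ, (∀ x ∈ E, ghat x ≤ ℓ x) ∧ y = ℓ S₀} :=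
    concEnv_set_bddBelow E ghat S₀ hS₀
  -- concEnv g ≤ concEnv ghat
  have hmono : concEnv E g S₀ ≤ concEnv E ghat S₀ := by
    apply csInf_le_csInf hbbg hne
    rintro y ⟨ℓ, hℓ, rfl⟩
    exact ⟨ℓ, fun x hx => (hle x hx).trans (hℓ x hx), rfl⟩
  constructor
  · intro heq ε hε
    have hlt : concEnv E ghat S₀ < concEnv E ghat S₀ + ε := by linarith
    obtain ⟨y, ⟨ℓ, hℓ, rfl⟩, hy⟩ := exists_lt_of_csInf_lt hne hlt
    exact ⟨ℓ, fun x hx => (hle x hx).trans (hℓ x hx),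
      by rw [← heq]; exact hy.le, hℓ⟩
  · intro h
    refine le_antisymm ?_ hmono
    have : ∀ ε : ℝ, 0 < ε → concEnv E ghat S₀ ≤ concEnv E g S₀ + ε := by
      intro ε hε
      obtain ⟨ℓ, _, hℓS, hℓmaj⟩ := h ε hε
      exact (csInf_le hbbgh ⟨ℓ, hℓmaj, rfl⟩).trans hℓS
    exact le_of_forall_pos_le_add this
end

section
/- Let E be a compact convex set, g, ĝ : E → ℝ bounded with g ≤ ĝ, and S₀ ∈ E. Suppose V^cal = (conc ĝ)(S₀) and V^term = (conc g)(S₀). Then V^term = V^cal if and only if for every ε > 0 there exists a continuous affine ℓ_ε on E with ℓ_ε ≥ g, ℓ_ε(S₀) ≤ (conc g)(S₀) + ε, and ĝ ≤ ℓ_ε pointwise. -/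
open Set

theorem stmt16 {V : Type*} [AddCommGroup V] [Module ℝ V] [TopologicalSpace V]
    [IsTopologicalAddGroup V] [ContinuousSMul ℝ V] [LocallyConvexSpace ℝ V]
    (E : Set V) (hEc : IsCompact E) (hEconv : Convex ℝ E) (hEne : E.Nonempty)
    (g ghat : V → ℝ)
    (hg : ∃ M : ℝ, ∀ x ∈ E, |g x| ≤ M) (hghat : ∃ M : ℝ, ∀ x ∈ E, |ghat x| ≤ M)
    (hle : ∀ x ∈ E, g x ≤ ghat x) (S₀ : V) (hS₀ : S₀ ∈ E)
    (Vcal Vterm : ℝ)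
    (hVcal : Vcal = concEnv E ghat S₀) (hVterm : Vterm = concEnv E g S₀) :
    Vterm = Vcal ↔
      (∀ ε : ℝ, 0 < ε → ∃ ℓ : V →ᴬ[ℝ] ℝ,
        (∀ x ∈ E, g x ≤ ℓ x) ∧ ℓ S₀ ≤ concEnv E g S₀ + ε ∧
        ∀ s ∈ E, ghat s ≤ ℓ s) := by
  obtain ⟨M, hM⟩ := hg
  obtain ⟨M', hM'⟩ := hghat
  set Sg := {y : ℝ | ∃ ℓ : V →ᴬ[ℝ] ℝ, (∀ x ∈ E, g x ≤ ℓ x) ∧ y = ℓ S₀} with hSgdef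
  set Sh := {y : ℝ | ∃ ℓ : V →ᴬ[ℝ] ℝ, (∀ x ∈ E, ghat x ≤ ℓ x) ∧ y = ℓ S₀} with hShdef
  have hcg : concEnv E g S₀ = sInf Sg := rfl
  have hch : concEnv E ghat S₀ = sInf Sh := rfl
  have hsub : Sh ⊆ Sg := by
    rintro y ⟨ℓ, hℓ, rfl⟩
    exact ⟨ℓ, fun x hx => (hle x hx).trans (hℓ x hx), rfl⟩
  have hShne : Sh.Nonempty := by
    refine ⟨_, ContinuousAffineMap.const ℝ V M', fun x hx => ?_, rfl⟩
    simpa using (abs_le.1 (hM' x hx)).2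
  have hSgne : Sg.Nonempty := hShne.mono hsub
  have hSgbdd : BddBelow Sg := by
    refine ⟨g S₀, ?_⟩
    rintro y ⟨ℓ, hℓ, rfl⟩
    exact hℓ S₀ hS₀
  have hShbdd : BddBelow Sh := hSgbdd.mono hsub
  have hmono : concEnv E g S₀ ≤ concEnv E ghat S₀ := by
    rw [hcg, hch]; exact csInf_le_csInf hSgbdd hShne hsub
  constructor
  · intro h ε hε
    obtain ⟨y, hy, hlt⟩ := Real.lt_sInf_add_pos hShne hε
    obtain ⟨ℓ, hℓ, rfl⟩ := hy
    refine ⟨ℓ, fun x hx => (hle x hx).trans (hℓ x hx), ?_, hℓ⟩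
    have : concEnv E g S₀ = sInf Sh := by rw [← hch, ← hVcal, ← h, hVterm]
    rw [this]
    exact hlt.le
  · intro h
    subst hVcal hVterm
    refine le_antisymm hmono ?_
    refine le_of_forall_pos_le_add fun ε hε => ?_
    obtain ⟨ℓ, hℓg, hℓS, hℓh⟩ := h ε hε
    have hmem : concEnv E ghat S₀ ≤ ℓ S₀ := by
      rw [hch]; exact csInf_le hShbdd ⟨ℓ, hℓh, rfl⟩
    linarith
end
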